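/- Let G be a finite directed graph. If G contains two distinct non-trivial strongly connected components C₁ and C₂ with edges (v₁, u₁) inside C₁ and (v₂, u₂) inside C₂, then the graph obtained by replacing edges (v₁, u₁) and (v₂, u₂) with (v₁, u₂) and (v₂, u₁) has reachability count f at least as large as that of G. -/

import Mathlib

/-- The number of ordered pairs `(v, u)` such that `u` is reachable from `v`. -/
noncomputable def reachCount {V : Type*} (E : V → V → Prop) : ℕ :=
  Nat.card {p : V × V // Relation.ReflTransGen E p.1 p.2}

/-- If a finite directed graph contains two distinct non-trivial strongly
connected components `C₁, C₂` with edges `(v₁,u₁)` in `C₁` and `(v₂,u₂)` in `C₂`, then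
swapping these edges for `(v₁,u₂)` and `(v₂,u₁)` does not decrease the reachability count. -/
theorem swap_edges_between_sccs_reachCount
    {V : Type*} [Fintype V] (E : V → V → Prop) (v₁ u₁ v₂ u₂ : V)
    (h₁ : E v₁ u₁) (h₂ : E v₂ u₂)
    (hnt₁ : v₁ ≠ u₁) (hnt₂ : v₂ ≠ u₂)
    (hscc₁ : Relation.ReflTransGen E u₁ v₁)
    (hscc₂ : Relation.ReflTransGen E u₂ v₂)
    (hdistinct : ¬ (Relation.ReflTransGen E v₁ v₂ ∧ Relation.ReflTransGen E v₂ v₁)) :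
    reachCount E ≤ reachCount (fun x y =>
      (E x y ∧ (x, y) ≠ (v₁, u₁) ∧ (x, y) ≠ (v₂, u₂)) ∨
      (x, y) = (v₁, u₂) ∨ (x, y) = (v₂, u₁)) := by
  set E'' : V → V → Prop :=
    fun x y => E x y ∧ (x, y) ≠ (v₁, u₁) ∧ (x, y) ≠ (v₂, u₂) with hE''
  set E' : V → V → Prop :=
    fun x y => E'' x y ∨ (x, y) = (v₁, u₂) ∨ (x, y) = (v₂, u₁) with hE'
  -- Lemma A: any point on a path from u₁ that reaches v₁ reaches v₁ avoiding both edges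
  have lemA : ∀ a : V, Relation.ReflTransGen E u₁ a →
      Relation.ReflTransGen E a v₁ → Relation.ReflTransGen E'' a v₁ := by
    intro a hu hav
    induction hav using Relation.ReflTransGen.head_induction_on with
    | refl => exact Relation.ReflTransGen.refl
    | @head a c hac hcv ih =>
      by_cases hcase1 : (a, c) = (v₁, u₁)
      · rw [Prod.mk.injEq] at hcase1
        obtain ⟨rfl, rfl⟩ := hcase1
        exact Relation.ReflTransGen.refl
      by_cases hcase2 : (a, c) = (v₂, u₂)
      · rw [Prod.mk.injEq] at hcase2
        obtain ⟨rfl, rfl⟩ := hcase2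
        exact absurd ⟨Relation.ReflTransGen.head h₁ hu,
          Relation.ReflTransGen.head hac hcv⟩ hdistinct
      · exact Relation.ReflTransGen.head ⟨hac, hcase1, hcase2⟩ (ih (hu.tail hac))
  -- Lemma B: symmetric for u₂ → v₂
  have lemB : ∀ a : V, Relation.ReflTransGen E u₂ a →
      Relation.ReflTransGen E a v₂ → Relation.ReflTransGen E'' a v₂ := by
    intro a hu hav
    induction hav using Relation.ReflTransGen.head_induction_on with
    | refl => exact Relation.ReflTransGen.refl
    | @head a c hac hcv ih =>
      by_cases hcase2 : (a, c) = (v₂, u₂)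
      · rw [Prod.mk.injEq] at hcase2
        obtain ⟨rfl, rfl⟩ := hcase2
        exact Relation.ReflTransGen.refl
      by_cases hcase1 : (a, c) = (v₁, u₁)
      · rw [Prod.mk.injEq] at hcase1
        obtain ⟨rfl, rfl⟩ := hcase1
        exact absurd ⟨Relation.ReflTransGen.head hac hcv,
          Relation.ReflTransGen.head h₂ hu⟩ hdistinct
      · exact Relation.ReflTransGen.head ⟨hac, hcase1, hcase2⟩ (ih (hu.tail hac))
  have hsub : ∀ x y, E'' x y → E' x y := fun x y h => Or.inl h
  have hA : Relation.ReflTransGen E' u₁ v₁ :=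
    Relation.ReflTransGen.mono hsub _ _ (lemA u₁ Relation.ReflTransGen.refl hscc₁)
  have hB : Relation.ReflTransGen E' u₂ v₂ :=
    Relation.ReflTransGen.mono hsub _ _ (lemB u₂ Relation.ReflTransGen.refl hscc₂)
  have e12 : E' v₁ u₂ := Or.inr (Or.inl rfl)
  have e21 : E' v₂ u₁ := Or.inr (Or.inr rfl)
  have h1' : Relation.ReflTransGen E' v₁ u₁ :=
    Relation.ReflTransGen.head e12 (hB.tail e21)
  have h2' : Relation.ReflTransGen E' v₂ u₂ :=
    Relation.ReflTransGen.head e21 (hA.tail e12)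
  -- any E-reachable pair is E'-reachable
  have main : ∀ a b : V, Relation.ReflTransGen E a b → Relation.ReflTransGen E' a b := by
    intro a b hab
    induction hab with
    | refl => exact Relation.ReflTransGen.refl
    | @tail c d hac hcd ih =>
      by_cases hc1 : (c, d) = (v₁, u₁)
      · rw [Prod.mk.injEq] at hc1
        obtain ⟨rfl, rfl⟩ := hc1
        exact ih.trans h1'
      by_cases hc2 : (c, d) = (v₂, u₂)
      · rw [Prod.mk.injEq] at hc2
        obtain ⟨rfl, rfl⟩ := hc2
        exact ih.trans h2'
      · exact ih.tail (Or.inl ⟨hcd, hc1, hc2⟩)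
  -- conclude by cardinality
  unfold reachCount
  have hss : {p : V × V | Relation.ReflTransGen E p.1 p.2} ⊆
      {p : V × V | Relation.ReflTransGen E' p.1 p.2} := fun p hp => main p.1 p.2 hp
  exact Nat.card_mono (Set.toFinite _) hss
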